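/- Let (L1,L2) and (L1,L2') be splittings of ℝ^d. Suppose the system has a dichotomy on (L1,L2) with maximal uniformity dimensions (u1,u2) and a dichotomy on (L1,L2') with maximal uniformity dimensions (u1',u2'). Then u1 = u1'. If in addition for every V' ∈ 𝒢_{u2}(L2') one has dim π_{L1}[V'] ≤ u1, where π_{L1} is the projection onto L1 along L2, then u2 ≤ u2'. -/

import Mathlib

open Set Filter Topology

noncomputable section

abbrev Euc (d : ℕ) := EuclideanSpace ℝ (Fin d)

/-- The solution `x(n, x₀)` of `x(n+1) = A(n) x(n)`, `x(0,x₀) = x₀`. -/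
def sol {d : ℕ} (A : ℕ → (Euc d ≃L[ℝ] Euc d)) : ℕ → Euc d → Euc d
  | 0, x => x
  | n + 1, x => A n (sol A n x)

/-- Boundedness of the coefficients `A(n)` and their inverses. -/
def BddSys {d : ℕ} (A : ℕ → (Euc d ≃L[ℝ] Euc d)) : Prop :=
  (∃ c : ℝ, ∀ n : ℕ, ‖(A n : Euc d →L[ℝ] Euc d)‖ ≤ c) ∧
  (∃ c : ℝ, ∀ n : ℕ, ‖((A n).symm : Euc d →L[ℝ] Euc d)‖ ≤ c)

/-- `D1(γ,U)` holds uniformly (constant `C`). -/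
def D1u {d : ℕ} (A : ℕ → (Euc d ≃L[ℝ] Euc d)) (γ : ℝ) (U : Submodule ℝ (Euc d)) : Prop :=
  ∃ C : ℝ, 0 < C ∧
    ∀ m n : ℕ, m ≤ n → ∀ x₀ ∈ U,
      ‖sol A n x₀‖ ≤ C * Real.exp (γ * ((n : ℝ) - (m : ℝ))) * ‖sol A m x₀‖

/-- `D2(γ,U)` holds uniformly (constant `C`). -/
def D2u {d : ℕ} (A : ℕ → (Euc d ≃L[ℝ] Euc d)) (γ : ℝ) (U : Submodule ℝ (Euc d)) : Prop :=
  ∃ C : ℝ, 0 < C ∧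
    ∀ m n : ℕ, m ≤ n → ∀ x₀ ∈ U,
      C * Real.exp (γ * ((n : ℝ) - (m : ℝ))) * ‖sol A m x₀‖ ≤ ‖sol A n x₀‖

/-- `𝒰` is a set of subspaces of `L` whose union is `L`. -/
def IsCover {d : ℕ} (𝒰 : Set (Submodule ℝ (Euc d))) (L : Submodule ℝ (Euc d)) : Prop :=
  (∀ U ∈ 𝒰, U ≤ L) ∧ (⋃ U ∈ 𝒰, (U : Set (Euc d))) = (L : Set (Euc d))

/-- `𝒢_j(L)` : the set of `j`-dimensional subspaces of `L`. -/
def Gr {d : ℕ} (j : ℕ) (L : Submodule ℝ (Euc d)) : Set (Submodule ℝ (Euc d)) :=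
  {U | U ≤ L ∧ Module.finrank ℝ U = j}

/-- The system has a dichotomy on the splitting `(L1,L2)` with uniformity
dimensions `(j1,j2)`. -/
def DichotomyDim0 {d : ℕ} (A : ℕ → (Euc d ≃L[ℝ] Euc d))
    (L1 L2 : Submodule ℝ (Euc d)) (j1 j2 : ℕ) : Prop :=
  IsCompl L1 L2 ∧ IsCover (Gr j1 L1) L1 ∧ IsCover (Gr j2 L2) L2 ∧
  ∃ α : ℝ, 0 < α ∧ (∀ U ∈ Gr j1 L1, D1u A (-α) U) ∧ (∀ U ∈ Gr j2 L2, D2u A α U)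

/-- `(u1,u2)` are maximal uniformity dimensions of a dichotomy on `(L1,L2)`. -/
def MaxUnifDims {d : ℕ} (A : ℕ → (Euc d ≃L[ℝ] Euc d))
    (L1 L2 : Submodule ℝ (Euc d)) (u1 u2 : ℕ) : Prop :=
  DichotomyDim0 A L1 L2 u1 u2 ∧
  ∀ l1 l2 : ℕ, DichotomyDim0 A L1 L2 l1 l2 → l1 ≤ u1 ∧ l2 ≤ u2

namespace MUAux

variable {d : ℕ}

lemma sol_add (A : ℕ → (Euc d ≃L[ℝ] Euc d)) (n : ℕ) (x y : Euc d) :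
    sol A n (x + y) = sol A n x + sol A n y := by
  induction n with
  | zero => rfl
  | succ n ih => simp [sol, ih, map_add]

lemma sol_back (A : ℕ → (Euc d ≃L[ℝ] Euc d)) {c₂ : ℝ}
    (hA2 : ∀ n, ‖((A n).symm : Euc d →L[ℝ] Euc d)‖ ≤ c₂)
    {m n : ℕ} (h : m ≤ n) (x : Euc d) :
    ‖sol A m x‖ ≤ (max c₂ 1) ^ (n - m) * ‖sol A n x‖ := by
  induction n, h using Nat.le_induction with
  | base => simp
  | succ n hmn ih =>
    have hcb : (1:ℝ) ≤ max c₂ 1 := le_max_right _ _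
    have h1 : sol A n x = (A n).symm (sol A (n+1) x) := by simp [sol]
    have h2 : ‖sol A n x‖ ≤ max c₂ 1 * ‖sol A (n+1) x‖ := by
      rw [h1]
      calc ‖(A n).symm (sol A (n+1) x)‖
          ≤ ‖((A n).symm : Euc d →L[ℝ] Euc d)‖ * ‖sol A (n+1) x‖ :=
            ((A n).symm : Euc d →L[ℝ] Euc d).le_opNorm _
        _ ≤ max c₂ 1 * ‖sol A (n+1) x‖ := by
            gcongr
            exact le_max_of_le_left (hA2 n)
    have hnm : n + 1 - m = (n - m) + 1 := by omega
    calc ‖sol A m x‖ ≤ (max c₂ 1) ^ (n - m) * ‖sol A n x‖ := ih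
      _ ≤ (max c₂ 1) ^ (n - m) * (max c₂ 1 * ‖sol A (n+1) x‖) :=
          mul_le_mul_of_nonneg_left h2 (pow_nonneg (by linarith) _)
      _ = (max c₂ 1) ^ (n + 1 - m) * ‖sol A (n+1) x‖ := by
          rw [hnm, pow_succ]; ring



lemma exists_extend (L : Submodule ℝ (Euc d)) :
    ∀ (k : ℕ) (W : Submodule ℝ (Euc d)), W ≤ L →
      Module.finrank ℝ W + k ≤ Module.finrank ℝ L →
      ∃ U, W ≤ U ∧ U ≤ L ∧ Module.finrank ℝ U = Module.finrank ℝ W + k := by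
  intro k
  induction k with
  | zero => exact fun W hWL _ => ⟨W, le_rfl, hWL, by simp⟩
  | succ k ih =>
    intro W hWL hk
    have hfin : Module.finrank ℝ W < Module.finrank ℝ L := by omega
    have hex : ∃ x ∈ L, x ∉ W := by
      by_contra h
      push_neg at h
      have hle : L ≤ W := fun x hx => h x hx
      have := Submodule.finrank_mono hle
      omega
    obtain ⟨x, hxL, hxW⟩ := hex
    have hx0 : x ≠ 0 := fun h => hxW (h ▸ W.zero_mem)
    have hspan : (ℝ ∙ x) ≤ L := by rwa [Submodule.span_singleton_le_iff_mem]
    have hinf : W ⊓ (ℝ ∙ x) = ⊥ := by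
      rw [eq_bot_iff]
      intro y hy
      rw [Submodule.mem_inf] at hy
      obtain ⟨hyW, hyx⟩ := hy
      rw [Submodule.mem_span_singleton] at hyx
      obtain ⟨r, rfl⟩ := hyx
      rcases eq_or_ne r 0 with rfl | hr
      · simp
      · exfalso
        apply hxW
        have : r⁻¹ • (r • x) ∈ W := W.smul_mem r⁻¹ hyW
        simpa [smul_smul, inv_mul_cancel₀ hr] using this
    have hrank : Module.finrank ℝ ↥(W ⊔ (ℝ ∙ x)) = Module.finrank ℝ W + 1 := by
      have h1 := Submodule.finrank_sup_add_finrank_inf_eq W (ℝ ∙ x)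
      rw [hinf, finrank_span_singleton hx0] at h1
      simp only [finrank_bot] at h1
      omega
    obtain ⟨U, h1, h2, h3⟩ := ih (W ⊔ (ℝ ∙ x)) (sup_le hWL hspan) (by omega)
    exact ⟨U, le_trans le_sup_left h1, h2, by omega⟩

lemma exists_mid (L W : Submodule ℝ (Euc d)) (j : ℕ) (hWL : W ≤ L)
    (h1 : Module.finrank ℝ W ≤ j) (h2 : j ≤ Module.finrank ℝ L) :
    ∃ U, W ≤ U ∧ U ≤ L ∧ Module.finrank ℝ U = j := by
  obtain ⟨U, a, b, c⟩ := exists_extend L (j - Module.finrank ℝ W) W hWL (by omega)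
  exact ⟨U, a, b, by omega⟩

lemma exists_antilip (V : Submodule ℝ (Euc d)) (f : Euc d →ₗ[ℝ] Euc d)
    (hf : ∀ x ∈ V, f x = 0 → x = 0) :
    ∃ c : ℝ, 0 < c ∧ ∀ x ∈ V, c * ‖x‖ ≤ ‖f x‖ := by
  set g : V →ₗ[ℝ] Euc d := f ∘ₗ V.subtype with hg
  have hginj : Function.Injective g := by
    intro a b hab
    have h0 : f ((a : Euc d) - b) = 0 := by
      rw [map_sub, sub_eq_zero]
      exact hab
    have : ((a : Euc d) - b) ∈ V := V.sub_mem a.2 b.2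
    have := hf _ this h0
    exact Subtype.ext (sub_eq_zero.mp this)
  let e : V ≃ₗ[ℝ] LinearMap.range g := LinearEquiv.ofInjective g hginj
  let e' : V ≃L[ℝ] LinearMap.range g := e.toContinuousLinearEquiv
  set M : ℝ := ‖(e'.symm : LinearMap.range g →L[ℝ] V)‖ + 1 with hM
  have hM0 : 0 < M := by positivity
  refine ⟨M⁻¹, by positivity, fun x hx => ?_⟩
  set v : V := ⟨x, hx⟩ with hv
  have h1 : ‖v‖ ≤ M * ‖e' v‖ := by
    conv_lhs => rw [← e'.symm_apply_apply v]
    calc ‖e'.symm (e' v)‖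
        ≤ ‖(e'.symm : LinearMap.range g →L[ℝ] V)‖ * ‖e' v‖ :=
          (e'.symm : LinearMap.range g →L[ℝ] V).le_opNorm _
      _ ≤ M * ‖e' v‖ := by
          apply mul_le_mul_of_nonneg_right _ (norm_nonneg _)
          rw [hM]; linarith
  have h2 : ‖e' v‖ = ‖f x‖ := by
    have : ((e' v : LinearMap.range g) : Euc d) = f x := by
      show ((e v : LinearMap.range g) : Euc d) = f x
      simp [e, hg, LinearEquiv.ofInjective_apply]
      rfl
    rw [← this]
    rfl
  have h3 : ‖v‖ = ‖x‖ := rfl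
  rw [h2, h3] at h1
  rw [inv_mul_le_iff₀ hM0]
  linarith [h1]

lemma exists_bound (f : Euc d →ₗ[ℝ] Euc d) :
    ∃ K : ℝ, 0 < K ∧ ∀ x, ‖f x‖ ≤ K * ‖x‖ := by
  let g : Euc d →L[ℝ] Euc d := LinearMap.toContinuousLinearMap f
  refine ⟨‖g‖ + 1, by positivity, fun x => ?_⟩
  have : ‖f x‖ = ‖g x‖ := rfl
  rw [this]
  calc ‖g x‖ ≤ ‖g‖ * ‖x‖ := g.le_opNorm x
    _ ≤ (‖g‖ + 1) * ‖x‖ := by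
        apply mul_le_mul_of_nonneg_right _ (norm_nonneg _)
        linarith



lemma rank_le_of_cover {j : ℕ} {L : Submodule ℝ (Euc d)} (h : IsCover (Gr j L) L) :
    j ≤ Module.finrank ℝ L := by
  have h0 : (0 : Euc d) ∈ (L : Set (Euc d)) := L.zero_mem
  rw [← h.2] at h0
  simp only [Set.mem_iUnion, SetLike.mem_coe] at h0
  obtain ⟨U, hU, -⟩ := h0
  rw [← hU.2]
  exact Submodule.finrank_mono hU.1

lemma cover_of_le {j : ℕ} {L : Submodule ℝ (Euc d)} (hj : 1 ≤ j)
    (hjL : j ≤ Module.finrank ℝ L) : IsCover (Gr j L) L := by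
  refine ⟨fun U hU => hU.1, ?_⟩
  apply subset_antisymm
  · exact Set.iUnion₂_subset fun U hU => hU.1
  · intro x hx
    have hxL : x ∈ L := hx
    have hsp : (ℝ ∙ x) ≤ L := by rwa [Submodule.span_singleton_le_iff_mem]
    have hr : Module.finrank ℝ ↥(ℝ ∙ x) ≤ j := by
      rcases eq_or_ne x 0 with rfl | hx0
      · have hb : (ℝ ∙ (0:Euc d)) = ⊥ := Submodule.span_singleton_eq_bot.mpr rfl
        rw [hb]
        simp only [finrank_bot]
        omega
      · rw [finrank_span_singleton hx0]; exact hj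
    obtain ⟨U, hU1, hU2, hU3⟩ := exists_mid L (ℝ ∙ x) j hsp hr hjL
    exact Set.mem_iUnion₂.mpr ⟨U, ⟨hU2, hU3⟩, hU1 (Submodule.mem_span_singleton_self x)⟩

lemma D1u_mono {A : ℕ → (Euc d ≃L[ℝ] Euc d)} {γ γ' : ℝ} (h : γ ≤ γ')
    {U : Submodule ℝ (Euc d)} : D1u A γ U → D1u A γ' U := by
  rintro ⟨C, hC, hb⟩
  refine ⟨C, hC, fun m n hmn x hx => ?_⟩
  refine (hb m n hmn x hx).trans ?_
  have hΔ : (0:ℝ) ≤ (n:ℝ) - m := sub_nonneg.mpr (by exact_mod_cast hmn)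
  exact mul_le_mul_of_nonneg_right (mul_le_mul_of_nonneg_left
    (Real.exp_le_exp.mpr (mul_le_mul_of_nonneg_right h hΔ)) hC.le) (norm_nonneg _)

lemma D2u_mono {A : ℕ → (Euc d ≃L[ℝ] Euc d)} {γ γ' : ℝ} (h : γ ≤ γ')
    {U : Submodule ℝ (Euc d)} : D2u A γ' U → D2u A γ U := by
  rintro ⟨C, hC, hb⟩
  refine ⟨C, hC, fun m n hmn x hx => ?_⟩
  refine le_trans ?_ (hb m n hmn x hx)
  have hΔ : (0:ℝ) ≤ (n:ℝ) - m := sub_nonneg.mpr (by exact_mod_cast hmn)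
  exact mul_le_mul_of_nonneg_right (mul_le_mul_of_nonneg_left
    (Real.exp_le_exp.mpr (mul_le_mul_of_nonneg_right h hΔ)) hC.le) (norm_nonneg _)



lemma D2u_split (A : ℕ → (Euc d ≃L[ℝ] Euc d)) {c₂ : ℝ}
    (hA2 : ∀ n, ‖((A n).symm : Euc d →L[ℝ] Euc d)‖ ≤ c₂)
    {α K c : ℝ} (hα : 0 < α) (hK : 0 < K) (hcp : 0 < c)
    (V' U₁ U₂ : Submodule ℝ (Euc d)) (π : Euc d →ₗ[ℝ] Euc d)
    (hπU₁ : ∀ x ∈ V', π x ∈ U₁) (hπU₂ : ∀ x ∈ V', x - π x ∈ U₂)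
    (hKb : ∀ x, ‖π x‖ ≤ K * ‖x‖)
    (hcbd : ∀ x ∈ V', c * ‖x‖ ≤ ‖x - π x‖)
    (hU₁ : D1u A (-α) U₁) (hU₂ : D2u A α U₂) :
    D2u A α V' := by
  obtain ⟨C₁, hC₁, h1⟩ := hU₁
  obtain ⟨C₂, hC₂, h2⟩ := hU₂
  have hcb1 : (1:ℝ) ≤ max c₂ 1 := le_max_right _ _
  have hcbpos : (0:ℝ) < max c₂ 1 := lt_of_lt_of_le one_pos hcb1
  set R : ℝ := C₁ * K / (C₂ * c) with hR
  have hR0 : 0 < R := by positivity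
  set T : ℝ := 2 * C₁ * R / C₂ + 1 with hT
  have hT1 : 1 ≤ T := by
    rw [hT]
    have h : 0 < 2 * C₁ * R / C₂ := by positivity
    linarith
  have hT0 : 0 < T := by linarith
  set N₀ : ℕ := Nat.ceil (Real.log T / (2 * α)) with hN₀
  set C : ℝ := min ((max c₂ 1)⁻¹ ^ N₀ * Real.exp (-(α * N₀))) (C₂ / (2 * (1 + R))) with hC
  have hC0 : 0 < C := by
    apply lt_min
    · exact mul_pos (pow_pos (inv_pos.mpr hcbpos) _) (Real.exp_pos _)
    · apply div_pos hC₂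
      have : (0:ℝ) < 1 + R := by linarith
      linarith
  refine ⟨C, hC0, ?_⟩
  intro m n hmn x hx
  have hΔcast : ((n:ℝ) - m) = ((n - m : ℕ) : ℝ) := by
    rw [Nat.cast_sub hmn]
  have hΔ0 : (0:ℝ) ≤ (n:ℝ) - m := sub_nonneg.mpr (by exact_mod_cast hmn)
  rcases lt_or_ge (n - m) N₀ with hcase | hcase
  · -- small gap
    have hback := sol_back A hA2 hmn x
    have key : C * Real.exp (α * ((n:ℝ) - m)) ≤ (max c₂ 1)⁻¹ ^ (n - m) := by
      have e1 : Real.exp (α * ((n:ℝ) - m)) ≤ Real.exp (α * N₀) := by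
        apply Real.exp_le_exp.mpr
        apply mul_le_mul_of_nonneg_left _ hα.le
        rw [hΔcast]
        exact_mod_cast hcase.le
      have e2 : C ≤ (max c₂ 1)⁻¹ ^ N₀ * Real.exp (-(α * N₀)) := min_le_left _ _
      have e3 : (max c₂ 1)⁻¹ ^ N₀ ≤ (max c₂ 1)⁻¹ ^ (n - m) := by
        apply pow_le_pow_of_le_one (by positivity) _ hcase.le
        exact inv_le_one_of_one_le₀ hcb1
      calc C * Real.exp (α * ((n:ℝ) - m))
          ≤ ((max c₂ 1)⁻¹ ^ N₀ * Real.exp (-(α * N₀))) * Real.exp (α * N₀) := by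
            apply mul_le_mul e2 e1 (Real.exp_pos _).le
            positivity
        _ = (max c₂ 1)⁻¹ ^ N₀ := by
            rw [mul_assoc, ← Real.exp_add]
            simp
        _ ≤ (max c₂ 1)⁻¹ ^ (n - m) := e3
    calc C * Real.exp (α * ((n:ℝ) - m)) * ‖sol A m x‖
        ≤ (max c₂ 1)⁻¹ ^ (n - m) * ‖sol A m x‖ :=
          mul_le_mul_of_nonneg_right key (norm_nonneg _)
      _ ≤ (max c₂ 1)⁻¹ ^ (n - m) * ((max c₂ 1) ^ (n - m) * ‖sol A n x‖) := by
          apply mul_le_mul_of_nonneg_left hback (by positivity)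
      _ = ‖sol A n x‖ := by
          rw [← mul_assoc, ← mul_pow, inv_mul_cancel₀ (ne_of_gt hcbpos), one_pow, one_mul]
  · -- large gap
    set y : Euc d := π x with hy'
    set z : Euc d := x - π x with hz'
    have hxyz : x = y + z := by rw [hy', hz']; abel
    have hy : y ∈ U₁ := hπU₁ x hx
    have hz : z ∈ U₂ := hπU₂ x hx
    have hsolm : sol A m x = sol A m y + sol A m z := by
      conv_lhs => rw [hxyz]
      exact sol_add A m y z
    have hsoln : sol A n x = sol A n y + sol A n z := by
      conv_lhs => rw [hxyz]
      exact sol_add A n y z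
    have ham : ‖sol A m y‖ ≤ C₁ * K * ‖x‖ := by
      have h0 := h1 0 m (Nat.zero_le m) y hy
      have hexp : Real.exp (-α * ((m:ℝ) - (0:ℕ))) ≤ 1 := by
        apply Real.exp_le_one_iff.mpr
        simp only [Nat.cast_zero, sub_zero]
        have : (0:ℝ) ≤ (m:ℝ) := Nat.cast_nonneg m
        nlinarith
      have hsol0 : sol A 0 y = y := rfl
      rw [hsol0] at h0
      calc ‖sol A m y‖ ≤ C₁ * Real.exp (-α * ((m:ℝ) - (0:ℕ))) * ‖y‖ := h0
        _ ≤ C₁ * 1 * ‖y‖ := by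
            apply mul_le_mul_of_nonneg_right _ (norm_nonneg _)
            exact mul_le_mul_of_nonneg_left hexp hC₁.le
        _ = C₁ * ‖y‖ := by ring
        _ ≤ C₁ * (K * ‖x‖) := mul_le_mul_of_nonneg_left (hKb x) hC₁.le
        _ = C₁ * K * ‖x‖ := by ring
    have hbm : C₂ * c * ‖x‖ ≤ ‖sol A m z‖ := by
      have h0 := h2 0 m (Nat.zero_le m) z hz
      have hexp : (1:ℝ) ≤ Real.exp (α * ((m:ℝ) - (0:ℕ))) := by
        apply Real.one_le_exp_iff.mpr
        simp only [Nat.cast_zero, sub_zero]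
        positivity
      have hsol0 : sol A 0 z = z := rfl
      rw [hsol0] at h0
      calc C₂ * c * ‖x‖ = C₂ * (c * ‖x‖) := by ring
        _ ≤ C₂ * ‖z‖ := mul_le_mul_of_nonneg_left (hcbd x hx) hC₂.le
        _ = C₂ * 1 * ‖z‖ := by ring
        _ ≤ C₂ * Real.exp (α * ((m:ℝ) - (0:ℕ))) * ‖z‖ := by
            apply mul_le_mul_of_nonneg_right _ (norm_nonneg _)
            exact mul_le_mul_of_nonneg_left hexp hC₂.le
        _ ≤ ‖sol A m z‖ := h0
    have key1 : ‖sol A m y‖ ≤ R * ‖sol A m z‖ := by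
      have hids : R * (C₂ * c) = C₁ * K := div_mul_cancel₀ _ (by positivity)
      calc ‖sol A m y‖ ≤ C₁ * K * ‖x‖ := ham
        _ = R * (C₂ * c * ‖x‖) := by rw [← hids]; ring
        _ ≤ R * ‖sol A m z‖ := mul_le_mul_of_nonneg_left hbm hR0.le
    have key2 : ‖sol A m x‖ ≤ (1 + R) * ‖sol A m z‖ := by
      rw [hsolm]
      calc ‖sol A m y + sol A m z‖ ≤ ‖sol A m y‖ + ‖sol A m z‖ := norm_add_le _ _
        _ ≤ R * ‖sol A m z‖ + ‖sol A m z‖ := by linarith [key1]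
        _ = (1 + R) * ‖sol A m z‖ := by ring
    have hbn : C₂ * Real.exp (α * ((n:ℝ) - m)) * ‖sol A m z‖ ≤ ‖sol A n z‖ :=
      h2 m n hmn z hz
    have han : ‖sol A n y‖ ≤ C₁ * Real.exp (-α * ((n:ℝ) - m)) * ‖sol A m y‖ :=
      h1 m n hmn y hy
    have key3 : ‖sol A n y‖ ≤ C₁ * R * Real.exp (-α * ((n:ℝ) - m)) * ‖sol A m z‖ := by
      calc ‖sol A n y‖ ≤ C₁ * Real.exp (-α * ((n:ℝ) - m)) * ‖sol A m y‖ := han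
        _ ≤ C₁ * Real.exp (-α * ((n:ℝ) - m)) * (R * ‖sol A m z‖) := by
            apply mul_le_mul_of_nonneg_left key1
            positivity
        _ = C₁ * R * Real.exp (-α * ((n:ℝ) - m)) * ‖sol A m z‖ := by ring
    have hlog : T ≤ Real.exp (2 * α * ((n:ℝ) - m)) := by
      have hN : Real.log T / (2 * α) ≤ (N₀ : ℝ) := Nat.le_ceil _
      have hNd : (N₀ : ℝ) ≤ (n:ℝ) - m := by
        rw [hΔcast]
        exact_mod_cast hcase
      have h2α : (0:ℝ) < 2 * α := by linarith
      have : Real.log T ≤ 2 * α * ((n:ℝ) - m) := by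
        rw [div_le_iff₀ h2α] at hN
        calc Real.log T ≤ (N₀:ℝ) * (2 * α) := hN
          _ ≤ ((n:ℝ) - m) * (2 * α) := mul_le_mul_of_nonneg_right hNd h2α.le
          _ = 2 * α * ((n:ℝ) - m) := by ring
      calc T = Real.exp (Real.log T) := (Real.exp_log hT0).symm
        _ ≤ Real.exp (2 * α * ((n:ℝ) - m)) := Real.exp_le_exp.mpr this
    have key4 : C₁ * R * Real.exp (-α * ((n:ℝ) - m)) ≤ C₂ / 2 * Real.exp (α * ((n:ℝ) - m)) := by
      set E : ℝ := Real.exp (α * ((n:ℝ) - m)) with hE'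
      have hE : 0 < E := Real.exp_pos _
      have hEneg : Real.exp (-α * ((n:ℝ) - m)) = E⁻¹ := by
        rw [hE', ← Real.exp_neg]
        ring_nf
      have hEE : Real.exp (2 * α * ((n:ℝ) - m)) = E * E := by
        rw [hE', ← Real.exp_add]
        ring_nf
      rw [hEE] at hlog
      have h2' : 2 * (C₁ * R) ≤ C₂ * (E * E) := by
        have hmul := mul_le_mul_of_nonneg_left hlog hC₂.le
        have hdc : C₂ * (2 * C₁ * R / C₂) = 2 * C₁ * R := mul_div_cancel₀ _ hC₂.ne'
        rw [hT] at hmul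
        rw [mul_add, hdc] at hmul
        linarith
      rw [hEneg, ← div_eq_mul_inv, div_le_iff₀ hE]
      linarith only [h2']
    have key5 : C₂ / 2 * Real.exp (α * ((n:ℝ) - m)) * ‖sol A m z‖ ≤ ‖sol A n x‖ := by
      have t1 : ‖sol A n z‖ - ‖sol A n y‖ ≤ ‖sol A n x‖ := by
        rw [hsoln]
        have : ‖sol A n z‖ ≤ ‖sol A n y + sol A n z‖ + ‖sol A n y‖ := by
          calc ‖sol A n z‖ = ‖(sol A n y + sol A n z) - sol A n y‖ := by
                congr 1
                abel
            _ ≤ ‖sol A n y + sol A n z‖ + ‖sol A n y‖ := norm_sub_le _ _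
        linarith
      have t3 : C₁ * R * Real.exp (-α * ((n:ℝ) - m)) * ‖sol A m z‖
          ≤ C₂ / 2 * Real.exp (α * ((n:ℝ) - m)) * ‖sol A m z‖ :=
        mul_le_mul_of_nonneg_right key4 (norm_nonneg _)
      have t4 : C₂ * Real.exp (α * ((n:ℝ) - m)) * ‖sol A m z‖
          - C₂ / 2 * Real.exp (α * ((n:ℝ) - m)) * ‖sol A m z‖
          = C₂ / 2 * Real.exp (α * ((n:ℝ) - m)) * ‖sol A m z‖ := by ring
      linarith only [hbn, key3, t1, t3, t4]
    have h1R : (0:ℝ) < 1 + R := by linarith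
    have hCle : C ≤ C₂ / (2 * (1 + R)) := min_le_right _ _
    calc C * Real.exp (α * ((n:ℝ) - m)) * ‖sol A m x‖
        ≤ C₂ / (2 * (1 + R)) * Real.exp (α * ((n:ℝ) - m)) * ((1 + R) * ‖sol A m z‖) := by
          apply mul_le_mul _ key2 (norm_nonneg _) (by positivity)
          exact mul_le_mul_of_nonneg_right hCle (Real.exp_pos _).le
      _ = C₂ / 2 * Real.exp (α * ((n:ℝ) - m)) * ‖sol A m z‖ := by
          field_simp
      _ ≤ ‖sol A n x‖ := key5


end MUAux

/-- **Independence of maximal uniformity dimensions of the splitting.** -/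
theorem max_unif_dims_independence {d : ℕ} (hd : 1 ≤ d)
    (A : ℕ → (Euc d ≃L[ℝ] Euc d)) (hA : BddSys A)
    (L1 L2 L2' : Submodule ℝ (Euc d))
    (hc : IsCompl L1 L2) (hc' : IsCompl L1 L2')
    (u1 u2 u1' u2' : ℕ)
    (hm : MaxUnifDims A L1 L2 u1 u2) (hm' : MaxUnifDims A L1 L2' u1' u2') :
    u1 = u1' ∧
    ((∀ V' : Submodule ℝ (Euc d), V' ≤ L2' → Module.finrank ℝ V' = u2 →
        Module.finrank ℝ
          (V'.map (L1.subtype ∘ₗ Submodule.linearProjOfIsCompl L1 L2 hc)) ≤ u1) →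
      u2 ≤ u2') := by
  obtain ⟨⟨hcpl, hcov1, hcov2, α, hα, hD1, hD2⟩, hmax⟩ := hm
  obtain ⟨⟨hcpl', hcov1', hcov2', α', hα', hD1', hD2'⟩, hmax'⟩ := hm'
  have hβ : 0 < min α α' := lt_min hα hα'
  constructor
  · -- u1 = u1'
    have d1 : DichotomyDim0 A L1 L2' u1 u2' :=
      ⟨hc', hcov1, hcov2', min α α', hβ,
        fun U hU => MUAux.D1u_mono (neg_le_neg (min_le_left α α')) (hD1 U hU),
        fun U hU => MUAux.D2u_mono (min_le_right α α') (hD2' U hU)⟩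
    have h12 := (hmax' u1 u2' d1).1
    have d2 : DichotomyDim0 A L1 L2 u1' u2 :=
      ⟨hcpl, hcov1', hcov2, min α α', hβ,
        fun U hU => MUAux.D1u_mono (neg_le_neg (min_le_right α α')) (hD1' U hU),
        fun U hU => MUAux.D2u_mono (min_le_left α α') (hD2 U hU)⟩
    have h21 := (hmax u1' u2 d2).1
    omega
  · intro hproj
    rcases Nat.eq_zero_or_pos u2 with h0 | hu2pos
    · omega
    have hr1 : u1 ≤ Module.finrank ℝ L1 := MUAux.rank_le_of_cover hcov1
    have hr2 : u2 ≤ Module.finrank ℝ L2 := MUAux.rank_le_of_cover hcov2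
    have hrL : Module.finrank ℝ L2 = Module.finrank ℝ L2' := by
      have e1 := Submodule.finrank_add_eq_of_isCompl hc
      have e2 := Submodule.finrank_add_eq_of_isCompl hc'
      omega
    obtain ⟨c₂, hc₂⟩ := hA.2
    have hD2V : ∀ V' ∈ Gr u2 L2', D2u A α V' := by
      intro V' hV'
      obtain ⟨hV'le, hV'rk⟩ := hV'
      have hproj' : Module.finrank ℝ
          (V'.map (L1.subtype ∘ₗ Submodule.linearProjOfIsCompl L1 L2 hc)) ≤ u1 :=
        hproj V' hV'le hV'rk
      set π : Euc d →ₗ[ℝ] Euc d := L1.subtype ∘ₗ Submodule.linearProjOfIsCompl L1 L2 hc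
        with hπ
      have hπapp : ∀ x, π x = ((Submodule.linearProjOfIsCompl L1 L2 hc x : L1) : Euc d) :=
        fun x => rfl
      have hW1le : V'.map π ≤ L1 := by
        intro w hw
        rw [Submodule.mem_map] at hw
        obtain ⟨x, hx, rfl⟩ := hw
        rw [hπapp]
        exact SetLike.coe_mem _
      obtain ⟨U₁, hWU₁, hU₁L, hU₁rk⟩ :=
        MUAux.exists_mid L1 (V'.map π) u1 hW1le hproj' hr1
      have hzL2 : ∀ x, x - π x ∈ L2 := by
        intro x
        have h := Submodule.projection_add_projection_eq_self hc x
        have hzx : x - π x = ((Submodule.linearProjOfIsCompl L2 L1 hc.symm x : L2) : Euc d) := by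
          rw [sub_eq_iff_eq_add', hπapp]
          exact h.symm
        rw [hzx]
        exact SetLike.coe_mem _
      set σ : Euc d →ₗ[ℝ] Euc d := LinearMap.id - π with hσ
      have hσapp : ∀ x, σ x = x - π x := by
        intro x
        rw [hσ]
        simp
      have hW2le : V'.map σ ≤ L2 := by
        intro w hw
        rw [Submodule.mem_map] at hw
        obtain ⟨x, hx, rfl⟩ := hw
        rw [hσapp]
        exact hzL2 x
      have hW2rk : Module.finrank ℝ (V'.map σ) ≤ u2 := by
        rw [← hV'rk]
        exact Submodule.finrank_map_le _ _
      obtain ⟨U₂, hWU₂, hU₂L, hU₂rk⟩ :=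
        MUAux.exists_mid L2 (V'.map σ) u2 hW2le hW2rk hr2
      obtain ⟨K, hK, hKb⟩ := MUAux.exists_bound π
      have hker : ∀ x ∈ V', σ x = 0 → x = 0 := by
        intro x hx h0
        rw [hσapp, sub_eq_zero] at h0
        have hxL1 : x ∈ L1 := by
          rw [h0, hπapp]
          exact SetLike.coe_mem _
        exact (Submodule.disjoint_def.mp hc'.disjoint) x hxL1 (hV'le hx)
      obtain ⟨c, hcp, hcb⟩ := MUAux.exists_antilip V' σ hker
      apply MUAux.D2u_split A hc₂ hα hK hcp V' U₁ U₂ π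
      · intro x hx
        exact hWU₁ (Submodule.mem_map.mpr ⟨x, hx, rfl⟩)
      · intro x hx
        apply hWU₂
        exact Submodule.mem_map.mpr ⟨x, hx, (hσapp x).symm⟩
      · exact hKb
      · intro x hx
        have := hcb x hx
        rwa [hσapp] at this
      · exact hD1 U₁ ⟨hU₁L, hU₁rk⟩
      · exact hD2 U₂ ⟨hU₂L, hU₂rk⟩
    have dich : DichotomyDim0 A L1 L2' u1' u2 := by
      refine ⟨hc', hcov1', MUAux.cover_of_le hu2pos (hrL ▸ hr2), min α α', hβ, ?_, ?_⟩
      · exact fun U hU => MUAux.D1u_mono (neg_le_neg (min_le_right α α')) (hD1' U hU)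
      · exact fun U hU => MUAux.D2u_mono (min_le_left α α') (hD2V U hU)
    exact (hmax' u1' u2 dich).2

end
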